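/- Let (X, 𝒜, μ) be a complete measure space endowed with a partial order ≤, let I ⊆ ℝ be a closed interval, and let q ∈ [1, ∞). Then the set L^q_≤(X, μ, I) of all elements of L^q(X, μ, ℝ) that possess a representative which is isotonic μ-almost everywhere (i.e., isotonic off some μ-null set) and takes values in I μ-almost everywhere, is a closed convex subset of L^q(X, μ, ℝ). -/
import Mathlib


open MeasureTheory
open scoped ENNReal

/-- The elements of `L^q(X, μ, ℝ)` having a representative that is isotonic off a `μ`-null
set and takes values in `I` almost everywhere. -/
def isoLq {X : Type*} [MeasurableSpace X] [PartialOrder X]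
    (μ : Measure X) (q : ℝ≥0∞) (I : Set ℝ) : Set (Lp ℝ q μ) :=
  {f | ∃ f₀ : X → ℝ, (⇑f) =ᵐ[μ] f₀ ∧
    (∃ N : Set X, μ N = 0 ∧ ∀ x ∉ N, ∀ y ∉ N, x ≤ y → f₀ x ≤ f₀ y) ∧
    ∀ᵐ x ∂μ, f₀ x ∈ I}

set_option synthInstance.maxHeartbeats 1000000 in
/-- For a complete measure space `(X, 𝒜, μ)` with a partial order, a closed interval
`I ⊆ ℝ` and `q ∈ [1, ∞)`, the set `L^q_≤(X, μ, I)` of elements of `L^q(X, μ, ℝ)` having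
an essentially isotonic representative with values in `I` a.e. is a closed convex subset
of `L^q(X, μ, ℝ)`. -/
theorem stmt_4 {X : Type*} [MeasurableSpace X] [PartialOrder X]
    (μ : Measure X) [μ.IsComplete] (I : Set ℝ) (hIcl : IsClosed I) (hIint : I.OrdConnected)
    (q : ℝ≥0∞) [Fact (1 ≤ q)] (hq : q ≠ ∞) :
    Convex ℝ (isoLq μ q I) ∧ IsClosed (isoLq μ q I) := by
  have hIconv : Convex ℝ I := hIint.convex
  constructor
  · intro f hf g hg a b ha hb hab
    obtain ⟨f₀, hf1, ⟨Nf, hNf, hNf'⟩, hf3⟩ := hf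
    obtain ⟨g₀, hg1, ⟨Ng, hNg, hNg'⟩, hg3⟩ := hg
    refine ⟨fun x => a * f₀ x + b * g₀ x, ?_, ⟨Nf ∪ Ng, measure_union_null hNf hNg, ?_⟩, ?_⟩
    · filter_upwards [hf1, hg1, Lp.coeFn_add (a • f) (b • g), Lp.coeFn_smul a f,
        Lp.coeFn_smul b g] with x h1 h2 h3 h4 h5
      simp only [h3, Pi.add_apply, h4, h5, Pi.smul_apply, smul_eq_mul, h1, h2]
    · intro x hx y hy hxy
      have h1 := hNf' x (fun h => hx (Set.mem_union_left _ h)) y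
        (fun h => hy (Set.mem_union_left _ h)) hxy
      have h2 := hNg' x (fun h => hx (Set.mem_union_right _ h)) y
        (fun h => hy (Set.mem_union_right _ h)) hxy
      exact add_le_add (mul_le_mul_of_nonneg_left h1 ha) (mul_le_mul_of_nonneg_left h2 hb)
    · filter_upwards [hf3, hg3] with x h1 h2
      simpa using hIconv h1 h2 ha hb hab
  · refine IsSeqClosed.isClosed ?_
    intro F f hF hlim
    have htm : TendstoInMeasure μ (fun n => F n) Filter.atTop f :=
      tendstoInMeasure_of_tendsto_Lp hlim
    obtain ⟨ns, hns, hae⟩ := htm.exists_seq_tendsto_ae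
    have hF' : ∀ n, ∃ f₀ : X → ℝ, ∃ N : Set X, (⇑(F n)) =ᵐ[μ] f₀ ∧
        μ N = 0 ∧ (∀ x ∉ N, ∀ y ∉ N, x ≤ y → f₀ x ≤ f₀ y) ∧
        ∀ᵐ x ∂μ, f₀ x ∈ I := by
      intro n
      obtain ⟨f₀, h1, ⟨N, h2, h3⟩, h4⟩ := hF n
      exact ⟨f₀, N, h1, h2, h3, h4⟩
    choose g N hg1 hN1 hN2 hg3 using hF'
    -- Combine all a.e. statements
    have hQ : ∀ᵐ x ∂μ, (∀ n, ⇑(F n) x = g n x) ∧ (∀ n, g n x ∈ I) ∧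
        Filter.Tendsto (fun i => ⇑(F (ns i)) x) Filter.atTop (nhds (⇑f x)) := by
      refine ((ae_all_iff.2 hg1).and ((ae_all_iff.2 hg3).and hae)).mono ?_
      tauto
    set T : Set X := {x | ¬ ((∀ n, ⇑(F n) x = g n x) ∧ (∀ n, g n x ∈ I) ∧
        Filter.Tendsto (fun i => ⇑(F (ns i)) x) Filter.atTop (nhds (⇑f x)))} with hT
    have hTnull : μ T = 0 := by
      rw [← MeasureTheory.ae_iff] at *
      exact hQ
    refine ⟨⇑f, Filter.EventuallyEq.refl _ _, ⟨(⋃ n, N n) ∪ T, ?_, ?_⟩, ?_⟩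
    · exact measure_union_null (measure_iUnion_null hN1) hTnull
    · intro x hx y hy hxy
      have hxT : x ∉ T := fun h => hx (Set.mem_union_right _ h)
      have hyT : y ∉ T := fun h => hy (Set.mem_union_right _ h)
      simp only [hT, Set.mem_setOf_eq, not_not] at hxT hyT
      obtain ⟨hx1, hx2, hx3⟩ := hxT
      obtain ⟨hy1, hy2, hy3⟩ := hyT
      refine le_of_tendsto_of_tendsto hx3 hy3 (Filter.Eventually.of_forall fun i => ?_)
      have hxN : x ∉ N (ns i) := fun h => hx (Set.mem_union_left _ (Set.mem_iUnion.2 ⟨ns i, h⟩))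
      have hyN : y ∉ N (ns i) := fun h => hy (Set.mem_union_left _ (Set.mem_iUnion.2 ⟨ns i, h⟩))
      calc ⇑(F (ns i)) x = g (ns i) x := hx1 _
        _ ≤ g (ns i) y := hN2 _ x hxN y hyN hxy
        _ = ⇑(F (ns i)) y := (hy1 _).symm
    · filter_upwards [hQ] with x ⟨h1, h2, h3⟩
      refine hIcl.mem_of_tendsto h3 (Filter.Eventually.of_forall fun i => ?_)
      rw [h1 (ns i)]
      exact h2 _
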